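/- Let q ∈ ℂ with |q| < 1 and let B be a complex unital Banach algebra containing elements x, y with y·x = q·(x·y). Then every finite sum f = Σ_{i,k≥1} a_{ik} x^i y^k (all indices i,k ≥ 1) is quasinilpotent in B, i.e., its spectral radius is 0. -/

import Mathlib

open Finset

lemma qp_comm {B : Type*} [Ring B] (q : ℂ) [Module ℂ B] [SMulCommClass ℂ B B] [IsScalarTower ℂ B B]
    (x y : B) (h : y * x = q • (x * y)) :
    ∀ k i : ℕ, y ^ k * x ^ i = q ^ (k * i) • (x ^ i * y ^ k) := by
  have h1 : ∀ i : ℕ, y * x ^ i = q ^ i • (x ^ i * y) := by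
    intro i
    induction i with
    | zero => simp
    | succ i ih =>
      calc y * x ^ (i + 1) = (y * x ^ i) * x := by rw [pow_succ, mul_assoc]
        _ = q ^ i • (x ^ i * (y * x)) := by rw [ih, smul_mul_assoc, mul_assoc]
        _ = q ^ (i + 1) • (x ^ (i + 1) * y) := by
            rw [h, mul_smul_comm, smul_smul, ← pow_succ, pow_succ x, mul_assoc]
  intro k i
  induction k with
  | zero => simp
  | succ k ih =>
    calc y ^ (k + 1) * x ^ i = y ^ k * (y * x ^ i) := by rw [pow_succ, mul_assoc]
      _ = q ^ i • ((y ^ k * x ^ i) * y) := by rw [h1, mul_smul_comm, mul_assoc]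
      _ = q ^ i • (q ^ (k * i) • (x ^ i * (y ^ k * y))) := by rw [ih, smul_mul_assoc, mul_assoc]
      _ = q ^ ((k + 1) * i) • (x ^ i * y ^ (k + 1)) := by
          rw [smul_smul, ← pow_add, ← pow_succ]
          congr 1
          ring

/-- `g` is representable as a finite sum `∑ c_j • x^{I_j} y^{K_j}` with `I_j ≥ 1`, `K_j ≥ s`,
and total weighted coefficient mass at most `D`. -/
def QPGood {B : Type*} [NormedRing B] [NormedAlgebra ℂ B] (x y : B) (M : ℝ) (s : ℕ) (D : ℝ)
    (g : B) : Prop :=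
  ∃ (ι : Type) (T : Finset ι) (c : ι → ℂ) (I K : ι → ℕ),
    (∀ j ∈ T, 1 ≤ I j) ∧ (∀ j ∈ T, s ≤ K j) ∧
    (∑ j ∈ T, ‖c j‖ * M ^ (I j + K j)) ≤ D ∧
    g = ∑ j ∈ T, c j • (x ^ I j * y ^ K j)

lemma qp_good_mul {B : Type*} [NormedRing B] [NormedAlgebra ℂ B] {q : ℂ} (hq : ‖q‖ ≤ 1)
    {x y : B} (h : y * x = q • (x * y)) {M : ℝ} (hM : 0 ≤ M) {s t : ℕ} {D E : ℝ} {g f : B}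
    (hg : QPGood x y M s D g) (hf : QPGood x y M t E f) (hE : 0 ≤ E) :
    QPGood x y M (s + t) (D * (‖q‖ ^ s * E)) (g * f) := by
  obtain ⟨ι, T, c, I, K, hI, hK, hsum, rfl⟩ := hg
  obtain ⟨ι', S, c', I', K', hI', hK', hsum', rfl⟩ := hf
  refine ⟨ι × ι', T ×ˢ S, fun p => c p.1 * c' p.2 * q ^ (K p.1 * I' p.2),
    fun p => I p.1 + I' p.2, fun p => K p.1 + K' p.2, ?_, ?_, ?_, ?_⟩
  · rintro ⟨j, p⟩ hp
    rw [Finset.mem_product] at hp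
    have := hI j hp.1
    show 1 ≤ I j + I' p
    omega
  · rintro ⟨j, p⟩ hp
    rw [Finset.mem_product] at hp
    have h1 := hK j hp.1
    have h2 := hK' p hp.2
    show s + t ≤ K j + K' p
    omega
  · rw [Finset.sum_product]
    calc (∑ j ∈ T, ∑ p ∈ S, ‖c j * c' p * q ^ (K j * I' p)‖ *
          M ^ (I j + I' p + (K j + K' p)))
        ≤ ∑ j ∈ T, ∑ p ∈ S, (‖c j‖ * M ^ (I j + K j)) * (‖q‖ ^ s * (‖c' p‖ * M ^ (I' p + K' p))) := by
          refine Finset.sum_le_sum fun j hj => Finset.sum_le_sum fun p hp => ?_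
          have hqe : ‖q ^ (K j * I' p)‖ ≤ ‖q‖ ^ s := by
            rw [norm_pow]
            refine pow_le_pow_of_le_one (norm_nonneg q) hq ?_
            have := hK j hj
            have := hI' p hp
            nlinarith
          have hMe : M ^ (I j + I' p + (K j + K' p)) = M ^ (I j + K j) * M ^ (I' p + K' p) := by
            rw [← pow_add]; ring_nf
          rw [norm_mul, norm_mul, hMe]
          have h1 : (0:ℝ) ≤ ‖c j‖ * ‖c' p‖ := by positivity
          have h2 : (0:ℝ) ≤ M ^ (I j + K j) * M ^ (I' p + K' p) := by positivity
          calc ‖c j‖ * ‖c' p‖ * ‖q ^ (K j * I' p)‖ * (M ^ (I j + K j) * M ^ (I' p + K' p))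
              ≤ ‖c j‖ * ‖c' p‖ * ‖q‖ ^ s * (M ^ (I j + K j) * M ^ (I' p + K' p)) := by
                exact mul_le_mul_of_nonneg_right (mul_le_mul_of_nonneg_left hqe h1) h2
            _ = ‖c j‖ * M ^ (I j + K j) * (‖q‖ ^ s * (‖c' p‖ * M ^ (I' p + K' p))) := by ring
      _ = (∑ j ∈ T, ‖c j‖ * M ^ (I j + K j)) *
            (‖q‖ ^ s * (∑ p ∈ S, ‖c' p‖ * M ^ (I' p + K' p))) := by
          rw [Finset.sum_mul]
          refine Finset.sum_congr rfl fun j hj => ?_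
          rw [← Finset.mul_sum, ← Finset.mul_sum]
      _ ≤ D * (‖q‖ ^ s * E) := by
          have h0 : (0:ℝ) ≤ ∑ j ∈ T, ‖c j‖ * M ^ (I j + K j) :=
            Finset.sum_nonneg fun j _ => by positivity
          have h0' : (0:ℝ) ≤ ∑ p ∈ S, ‖c' p‖ * M ^ (I' p + K' p) :=
            Finset.sum_nonneg fun p _ => by positivity
          have hqs : (0:ℝ) ≤ ‖q‖ ^ s := pow_nonneg (norm_nonneg q) s
          exact mul_le_mul hsum (mul_le_mul_of_nonneg_left hsum' hqs)
            (mul_nonneg hqs h0') (h0.trans hsum)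
  · rw [Finset.sum_mul_sum, Finset.sum_product]
    refine Finset.sum_congr rfl fun j _ => Finset.sum_congr rfl fun p _ => ?_
    have key : (x ^ I j * y ^ K j) * (x ^ I' p * y ^ K' p)
        = q ^ (K j * I' p) • (x ^ (I j + I' p) * y ^ (K j + K' p)) := by
      calc (x ^ I j * y ^ K j) * (x ^ I' p * y ^ K' p)
          = x ^ I j * ((y ^ K j * x ^ I' p) * y ^ K' p) := by rw [mul_assoc, mul_assoc]
        _ = q ^ (K j * I' p) • (x ^ I j * (x ^ I' p * (y ^ K j * y ^ K' p))) := by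
            rw [qp_comm q x y h, smul_mul_assoc, mul_smul_comm, mul_assoc]
        _ = q ^ (K j * I' p) • (x ^ (I j + I' p) * y ^ (K j + K' p)) := by
            rw [pow_add, pow_add, mul_assoc]
    rw [smul_mul_smul_comm, key, smul_smul]

lemma qp_good_norm {B : Type*} [NormedRing B] [NormedAlgebra ℂ B] {x y : B} {M : ℝ}
    (hM : ∀ i k : ℕ, 1 ≤ i → 1 ≤ k → ‖x ^ i * y ^ k‖ ≤ M ^ (i + k)) {s : ℕ} (hs : 1 ≤ s)
    {D : ℝ} {g : B} (hg : QPGood x y M s D g) : ‖g‖ ≤ D := by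
  obtain ⟨ι, T, c, I, K, hI, hK, hsum, rfl⟩ := hg
  calc ‖∑ j ∈ T, c j • (x ^ I j * y ^ K j)‖ ≤ ∑ j ∈ T, ‖c j • (x ^ I j * y ^ K j)‖ :=
        norm_sum_le _ _
    _ ≤ ∑ j ∈ T, ‖c j‖ * M ^ (I j + K j) := by
        refine Finset.sum_le_sum fun j hj => ?_
        rw [norm_smul]
        exact mul_le_mul_of_nonneg_left
          (hM _ _ (hI j hj) (le_trans hs (hK j hj))) (norm_nonneg _)
    _ ≤ D := hsum

open Finset ENNReal NNReal Filter Topology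

/-- In a complex unital Banach algebra with `y * x = q • (x * y)`, `|q| < 1`, every finite sum
`f = Σ_{i,k ≥ 1} a_{ik} x^i y^k` is quasinilpotent, i.e. its spectral radius is `0`. -/
theorem quantum_plane_quasinilpotent {B : Type*} [NormedRing B] [NormedAlgebra ℂ B]
    [CompleteSpace B]
    (q : ℂ) (hq : ‖q‖ < 1) (x y : B) (h : y * x = q • (x * y))
    (a : ℕ × ℕ →₀ ℂ) (hsupp : ∀ p ∈ a.support, 1 ≤ p.1 ∧ 1 ≤ p.2) :
    spectralRadius ℂ (a.sum fun p c => c • (x ^ p.1 * y ^ p.2)) = 0 := by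
  set f := a.sum fun p c => c • (x ^ p.1 * y ^ p.2) with hfdef
  set M : ℝ := max ‖x‖ ‖y‖ with hMdef
  have hM0 : 0 ≤ M := le_trans (norm_nonneg x) (le_max_left _ _)
  have hMbound : ∀ i k : ℕ, 1 ≤ i → 1 ≤ k → ‖x ^ i * y ^ k‖ ≤ M ^ (i + k) := by
    intro i k hi hk
    calc ‖x ^ i * y ^ k‖ ≤ ‖x ^ i‖ * ‖y ^ k‖ := norm_mul_le _ _
      _ ≤ ‖x‖ ^ i * ‖y‖ ^ k :=
          mul_le_mul (norm_pow_le' x hi) (norm_pow_le' y hk) (norm_nonneg _)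
            (pow_nonneg (norm_nonneg _) _)
      _ ≤ M ^ i * M ^ k :=
          mul_le_mul (pow_le_pow_left₀ (norm_nonneg x) (le_max_left _ _) i)
            (pow_le_pow_left₀ (norm_nonneg y) (le_max_right _ _) k)
            (pow_nonneg (norm_nonneg _) _) (pow_nonneg hM0 _)
      _ = M ^ (i + k) := (pow_add M i k).symm
  set C : ℝ := ∑ p ∈ a.support, ‖a p‖ * M ^ (p.1 + p.2) with hCdef
  have hC0 : 0 ≤ C := Finset.sum_nonneg fun p _ => by positivity
  have hbase : QPGood x y M 1 C f :=
    ⟨ℕ × ℕ, a.support, a, Prod.fst, Prod.snd, fun p hp => (hsupp p hp).1,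
      fun p hp => (hsupp p hp).2, le_refl C, rfl⟩
  have hq1 : ‖q‖ ≤ 1 := hq.le
  have key : ∀ s : ℕ, QPGood x y M (s + 1) (C ^ (s + 1) * ‖q‖ ^ ((s + 1).choose 2))
      (f ^ (s + 1)) := by
    intro s
    induction s with
    | zero => simpa using hbase
    | succ s ih =>
      have h2 := qp_good_mul hq1 h hM0 ih hbase hC0
      have hcc : (s + 1 + 1).choose 2 = (s + 1).choose 2 + (s + 1) := by
        have h3 := Nat.choose_succ_succ (s + 1) 1
        simpa [Nat.choose_one_right, Nat.add_comm] using h3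
      have hD : C ^ (s + 1 + 1) * ‖q‖ ^ ((s + 1 + 1).choose 2)
          = C ^ (s + 1) * ‖q‖ ^ ((s + 1).choose 2) * (‖q‖ ^ (s + 1) * C) := by
        rw [hcc, pow_add, pow_add]
        ring
      rw [hD, pow_succ f (s + 1)]
      exact h2
  have hnorm : ∀ k : ℕ, ‖f ^ (2 * k + 1)‖ ≤ (C * ‖q‖ ^ k) ^ (2 * k + 1) := by
    intro k
    have hch : (2 * k + 1).choose 2 = k * (2 * k + 1) := by
      rw [Nat.choose_two_right, show 2 * k + 1 - 1 = 2 * k by omega,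
        show (2 * k + 1) * (2 * k) = k * (2 * k + 1) * 2 by ring]
      exact Nat.mul_div_cancel _ (by norm_num)
    have := qp_good_norm hMbound (by omega) (key (2 * k))
    rwa [hch, pow_mul, ← mul_pow] at this
  -- pass to `ℝ≥0`
  set ρ : ℝ≥0 := ‖q‖₊ with hρdef
  set V : ℕ → ℝ≥0 := fun k => C.toNNReal * ρ ^ k with hVdef
  have hVnorm : ∀ k : ℕ, ‖f ^ (2 * k + 1)‖₊ ≤ V k ^ (2 * k + 1) := by
    intro k
    rw [← NNReal.coe_le_coe, coe_nnnorm, NNReal.coe_pow, hVdef, NNReal.coe_mul, NNReal.coe_pow,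
      Real.coe_toNNReal C hC0, hρdef, coe_nnnorm]
    exact hnorm k
  set N : ℝ≥0 := max 1 ‖(1 : B)‖₊ with hNdef
  have hstep : ∀ k : ℕ, spectralRadius ℂ f ≤ ((V k : ℝ≥0∞)) * (N : ℝ≥0∞) := by
    intro k
    refine (spectrum.spectralRadius_le_pow_nnnorm_pow_one_div ℂ f (2 * k)).trans (mul_le_mul' ?_ ?_)
    · have h1 : ((‖f ^ (2 * k + 1)‖₊ : ℝ≥0∞)) ≤ ((V k : ℝ≥0∞)) ^ (2 * k + 1) := by
        rw [← ENNReal.coe_pow]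
        exact_mod_cast hVnorm k
      have he : (0 : ℝ) ≤ (1 / ((2 * k : ℕ) + 1) : ℝ) := by positivity
      calc (‖f ^ (2 * k + 1)‖₊ : ℝ≥0∞) ^ (1 / ((2 * k : ℕ) + 1) : ℝ)
          ≤ (((V k : ℝ≥0∞)) ^ (2 * k + 1)) ^ (1 / ((2 * k : ℕ) + 1) : ℝ) :=
            ENNReal.rpow_le_rpow h1 he
        _ = (V k : ℝ≥0∞) := by
            rw [← ENNReal.rpow_natCast ((V k : ℝ≥0∞)) (2 * k + 1), ← ENNReal.rpow_mul]
            rw [show ((2 * k + 1 : ℕ) : ℝ) * (1 / ((2 * k : ℕ) + 1) : ℝ) = 1 by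
              push_cast
              field_simp]
            exact ENNReal.rpow_one _
    · rcases le_total ((‖(1 : B)‖₊ : ℝ≥0∞)) 1 with h1 | h1
      · refine le_trans (ENNReal.rpow_le_one h1 (by positivity)) ?_
        rw [hNdef]
        exact_mod_cast le_max_left (1 : ℝ≥0) ‖(1 : B)‖₊
      · have h2 : ((‖(1 : B)‖₊ : ℝ≥0∞)) ^ (1 / ((2 * k : ℕ) + 1) : ℝ)
            ≤ ((‖(1 : B)‖₊ : ℝ≥0∞)) ^ (1 : ℝ) := by
          refine ENNReal.rpow_le_rpow_of_exponent_le h1 ?_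
          rw [div_le_one (by positivity)]
          have : (0:ℝ) ≤ ((2 * k : ℕ) : ℝ) := Nat.cast_nonneg _
          linarith
        rw [ENNReal.rpow_one] at h2
        refine h2.trans ?_
        rw [hNdef]
        exact_mod_cast le_max_right (1 : ℝ≥0) ‖(1 : B)‖₊
  have hρ1 : (ρ : ℝ≥0∞) < 1 := by
    rw [hρdef]
    have : ‖q‖₊ < 1 := by
      rw [← NNReal.coe_lt_coe, coe_nnnorm]
      exact hq
    exact_mod_cast this
  have htend : Tendsto (fun k : ℕ => ((V k : ℝ≥0∞)) * (N : ℝ≥0∞)) atTop (𝓝 0) := by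
    have hpow : Tendsto (fun k : ℕ => ((ρ : ℝ≥0∞)) ^ k) atTop (𝓝 0) :=
      ENNReal.tendsto_pow_atTop_nhds_zero_of_lt_one hρ1
    have hc : Tendsto (fun k : ℕ => ((C.toNNReal : ℝ≥0∞) * (N : ℝ≥0∞)) * ((ρ : ℝ≥0∞)) ^ k)
        atTop (𝓝 (((C.toNNReal : ℝ≥0∞) * (N : ℝ≥0∞)) * 0)) :=
      ENNReal.Tendsto.const_mul hpow
        (Or.inr (ENNReal.mul_ne_top ENNReal.coe_ne_top ENNReal.coe_ne_top))
    rw [mul_zero] at hc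
    refine hc.congr fun k => ?_
    rw [hVdef]
    push_cast
    ring
  exact le_antisymm (ge_of_tendsto' htend hstep) zero_le
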